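/- Let U(3) have basis e1, e2 with e1² = e2² = 0, ⟨e1,e2⟩ = 3, and U have basis e1', e2' with (e1')² = (e2')² = 0, ⟨e1',e2'⟩ = 1, and form the orthogonal direct sum U(3) ⊕ U. Then the linear map ρ defined by ρ(e1) = -2e1 + 3e1', ρ(e2) = e2 + 3e2', ρ(e1') = -e1 + e1', ρ(e2') = -e2 - 2e2' is an isometry of U(3) ⊕ U of order exactly 3 that acts trivially on the discriminant group. -/
import Mathlib


/-- The explicit linear map `ρ₁` on `U(3) ⊕ U` (with Gram matrix
`[[0,3],[3,0]] ⊕ [[0,1],[1,0]]`) given by `ρ(e₁) = -2e₁ + 3e₁'`, `ρ(e₂) = e₂ + 3e₂'`,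
`ρ(e₁') = -e₁ + e₁'`, `ρ(e₂') = -e₂ - 2e₂'` is an isometry of order exactly 3 acting
trivially on the discriminant group. -/
theorem stmt4 :
    ∀ (G M : Matrix (Fin 4) (Fin 4) ℤ),
      G = !![0, 3, 0, 0; 3, 0, 0, 0; 0, 0, 0, 1; 0, 0, 1, 0] →
      M = !![-2, 0, -1, 0; 0, 1, 0, -1; 3, 0, 1, 0; 0, 3, 0, -2] →
      M.transpose * G * M = G ∧ M ^ 3 = 1 ∧ M ≠ 1 ∧
        (∀ x : Fin 4 → ℚ,
          (∀ i, ∃ m : ℤ, (G.map (Int.cast : ℤ → ℚ)).mulVec x i = m) →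
          (∀ i, ∃ m : ℤ, ((M.map (Int.cast : ℤ → ℚ)).mulVec x - x) i = m)) := by
  intro G M hG hM
  subst hG hM
  refine ⟨by decide, by decide, by decide, ?_⟩
  intro x h i
  obtain ⟨a, ha⟩ := h 0
  obtain ⟨b, hb⟩ := h 1
  obtain ⟨c, hc⟩ := h 2
  obtain ⟨d, hd⟩ := h 3
  simp [Matrix.mulVec, dotProduct, Fin.sum_univ_four] at ha hb hc hd
  fin_cases i <;>
    simp [Matrix.mulVec, dotProduct, Fin.sum_univ_four]
  · exact ⟨-b - d, by push_cast; linarith⟩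
  · exact ⟨-c, by push_cast; linarith⟩
  · exact ⟨b, by push_cast; linarith⟩
  · exact ⟨a - 3*c, by push_cast; linarith⟩
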